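/- For each arc f = (u,v) in a nonempty digraph D, dac(D) − 1 ≤ dac(D − f) ≤ dac(D) + 1, where D − f is the digraph obtained from D by deleting the arc f. -/

import Mathlib

/-- The subset `S` of vertices induces an acyclic subdigraph of the digraph with
arc relation `A` (i.e. there is no directed cycle all of whose vertices lie in `S`). -/
def AcyclicSet {V : Type*} (A : V → V → Prop) (S : Set V) : Prop :=
  ∀ v : V, ¬ Relation.TransGen (fun x y => x ∈ S ∧ y ∈ S ∧ A x y) v v

/-- `c` is an acyclic vertex coloring of the digraph `A` with `k` colors:
`c` is surjective and every chromatic class induces an acyclic subdigraph. -/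
def IsAcyclicColoring {V : Type*} (A : V → V → Prop) {k : ℕ} (c : V → Fin k) : Prop :=
  Function.Surjective c ∧ ∀ i : Fin k, AcyclicSet A {v | c v = i}

/-- `c` is a complete vertex coloring of the digraph `A` with `k` colors:
`c` is surjective and for every ordered pair of distinct colors `(i, j)` there is
an arc `(u, v)` with `c u = i` and `c v = j`. -/
def IsCompleteColoring {V : Type*} (A : V → V → Prop) {k : ℕ} (c : V → Fin k) : Prop :=
  Function.Surjective c ∧
    ∀ i j : Fin k, i ≠ j → ∃ u v : V, A u v ∧ c u = i ∧ c v = j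

/-- The diachromatic number: the largest `k` admitting a complete acyclic `k`-coloring. -/
noncomputable def dac {V : Type*} (A : V → V → Prop) : ℕ :=
  sSup {k | ∃ c : V → Fin k, IsAcyclicColoring A c ∧ IsCompleteColoring A c}

/-- The dichromatic number: the smallest `k` admitting an acyclic `k`-coloring. -/
noncomputable def dc {V : Type*} (A : V → V → Prop) : ℕ :=
  sInf {k | ∃ c : V → Fin k, IsAcyclicColoring A c}

/-- The pseudoachromatic number: the largest `k` admitting a complete `k`-coloring. -/
noncomputable def psi {V : Type*} (A : V → V → Prop) : ℕ :=
  sSup {k | ∃ c : V → Fin k, IsCompleteColoring A c}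

/-- `A` is a tournament: no loops, and for distinct vertices exactly one of the
two possible arcs is present. -/
def IsTournament {V : Type*} (A : V → V → Prop) : Prop :=
  (∀ v : V, ¬ A v v) ∧ ∀ u v : V, u ≠ v → (A u v ↔ ¬ A v u)

namespace Stmt6Aux

variable {V : Type*}

lemma not_transGen_of_not {r : V → V → Prop} (h : ∀ x y, ¬ r x y) {a b : V} :
    ¬ Relation.TransGen r a b := by
  intro ht
  cases ht with
  | single h' => exact h _ _ h'
  | tail _ h' => exact h _ _ h'

lemma acyclicSet_mono {A : V → V → Prop} {S T : Set V} (hsub : S ⊆ T)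
    (hT : AcyclicSet A T) : AcyclicSet A S := fun w hw =>
  hT w (Relation.TransGen.mono (p := fun x y => x ∈ T ∧ y ∈ T ∧ A x y)
    (fun x y (h : x ∈ S ∧ y ∈ S ∧ A x y) => ⟨hsub h.1, hsub h.2.1, h.2.2⟩) w w hw)

lemma acyclicSet_of_rel_imp {A B : V → V → Prop} {S : Set V}
    (h : ∀ x y, x ∈ S → y ∈ S → B x y → A x y)
    (hA : AcyclicSet A S) : AcyclicSet B S := fun w hw =>
  hA w (Relation.TransGen.mono (p := fun x y => x ∈ S ∧ y ∈ S ∧ A x y)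
    (fun x y (hr : x ∈ S ∧ y ∈ S ∧ B x y) => ⟨hr.1, hr.2.1, h _ _ hr.1 hr.2.1 hr.2.2⟩) w w hw)

lemma acyclicSet_singleton {A : V → V → Prop} {u : V} (h : ¬ A u u) :
    AcyclicSet A {u} := by
  intro w
  apply not_transGen_of_not
  rintro x y ⟨hx, hy, hA⟩
  rw [Set.mem_singleton_iff] at hx hy
  subst hx; subst hy; exact h hA

lemma acyclicSet_union {A : V → V → Prop} {S T : Set V}
    (hS : AcyclicSet A S) (hT : AcyclicSet A T)
    (hST : ∀ x ∈ S, ∀ y ∈ T, ¬ A x y) :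
    AcyclicSet A (S ∪ T) := by
  intro w hw
  have step : ∀ x y : V, (x ∈ S ∪ T ∧ y ∈ S ∪ T ∧ A x y) → x ∈ S → y ∈ S := by
    intro x y hr hx
    by_cases hyS : y ∈ S
    · exact hyS
    · exact absurd hr.2.2 (hST x hx y (hr.2.1.resolve_left hyS))
  have inS : ∀ a b : V, Relation.TransGen (fun x y => x ∈ S ∪ T ∧ y ∈ S ∪ T ∧ A x y) a b →
      a ∈ S → b ∈ S ∧ Relation.TransGen (fun x y => x ∈ S ∧ y ∈ S ∧ A x y) a b := by
    intro a b h
    induction h with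
    | single h' =>
      intro ha
      have hb := step _ _ h' ha
      exact ⟨hb, Relation.TransGen.single ⟨ha, hb, h'.2.2⟩⟩
    | @tail b' c' h1 h2 ih =>
      intro ha
      obtain ⟨hbS, ht⟩ := ih ha
      have hcS := step _ _ h2 hbS
      exact ⟨hcS, ht.tail ⟨hbS, hcS, h2.2.2⟩⟩
  have notS : ∀ a b : V, Relation.TransGen (fun x y => x ∈ S ∪ T ∧ y ∈ S ∪ T ∧ A x y) a b →
      b ∉ S → a ∉ S ∧ Relation.TransGen (fun x y => x ∈ T ∧ y ∈ T ∧ A x y) a b := by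
    intro a b h
    induction h with
    | single h' =>
      intro hb
      have ha : a ∉ S := fun ha => hb (step _ _ h' ha)
      exact ⟨ha, Relation.TransGen.single
        ⟨h'.1.resolve_left ha, h'.2.1.resolve_left hb, h'.2.2⟩⟩
    | @tail b' c' h1 h2 ih =>
      intro hc
      have hbnS : b' ∉ S := fun hb => hc (step _ _ h2 hb)
      obtain ⟨ha, ht⟩ := ih hbnS
      exact ⟨ha, ht.tail ⟨h2.1.resolve_left hbnS, h2.2.1.resolve_left hc, h2.2.2⟩⟩
  by_cases hwS : w ∈ S
  · exact hS w (inS w w hw hwS).2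
  · exact hT w (notS w w hw hwS).2

/-- Splice lemma: a `TransGen` cycle-path w.r.t. `A` within `S` either avoids the
arc `(u,v)` entirely, or `u, v ∈ S` with `A'`-paths around the uses of `(u,v)`. -/
lemma transGen_split {A : V → V → Prop} {u v : V} {S : Set V} {a b : V}
    (h : Relation.TransGen (fun x y => x ∈ S ∧ y ∈ S ∧ A x y) a b) :
    Relation.TransGen (fun x y => x ∈ S ∧ y ∈ S ∧ (A x y ∧ ¬(x = u ∧ y = v))) a b ∨
      (u ∈ S ∧ v ∈ S ∧
        Relation.ReflTransGen (fun x y => x ∈ S ∧ y ∈ S ∧ (A x y ∧ ¬(x = u ∧ y = v))) a u ∧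
        Relation.ReflTransGen (fun x y => x ∈ S ∧ y ∈ S ∧ (A x y ∧ ¬(x = u ∧ y = v))) v b) := by
  induction h with
  | @single b' h' =>
    by_cases hfc : a = u ∧ b' = v
    · obtain ⟨rfl, rfl⟩ := hfc
      exact Or.inr ⟨h'.1, h'.2.1, Relation.ReflTransGen.refl, Relation.ReflTransGen.refl⟩
    · exact Or.inl (Relation.TransGen.single ⟨h'.1, h'.2.1, h'.2.2, hfc⟩)
  | @tail b' c' h1 h2 ih =>
    by_cases hfc : b' = u ∧ c' = v
    · obtain ⟨rfl, rfl⟩ := hfc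
      refine Or.inr ⟨h2.1, h2.2.1, ?_, Relation.ReflTransGen.refl⟩
      rcases ih with ht | ⟨_, _, hau, _⟩
      · exact ht.to_reflTransGen
      · exact hau
    · have step' : b' ∈ S ∧ c' ∈ S ∧ (A b' c' ∧ ¬(b' = u ∧ c' = v)) :=
        ⟨h2.1, h2.2.1, h2.2.2, hfc⟩
      rcases ih with ht | ⟨hu, hv, hau, hvb⟩
      · exact Or.inl (ht.tail step')
      · exact Or.inr ⟨hu, hv, hau, hvb.tail step'⟩

lemma exists_last {r : V → V → Prop} {a b : V} (h : Relation.TransGen r a b) :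
    ∃ z, r z b := by
  cases h with
  | single h' => exact ⟨a, h'⟩
  | tail _ h2 => exact ⟨_, h2⟩

lemma mem_of_coloring {A : V → V → Prop} {ι : Type*} [Fintype ι] {g : V → ι}
    (hsurj : Function.Surjective g)
    (hacy : ∀ i : ι, AcyclicSet A {w | g w = i})
    (hcomp : ∀ i j : ι, i ≠ j → ∃ x y : V, A x y ∧ g x = i ∧ g y = j) :
    ∃ c : V → Fin (Fintype.card ι), IsAcyclicColoring A c ∧ IsCompleteColoring A c := by
  let e := Fintype.equivFin ι
  have hsurj' : Function.Surjective (fun w => e (g w)) := e.surjective.comp hsurj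
  refine ⟨fun w => e (g w), ⟨hsurj', ?_⟩, hsurj', ?_⟩
  · intro i
    have hset : {w | e (g w) = i} = {w | g w = e.symm i} := by
      ext w; simp [Equiv.apply_eq_iff_eq_symm_apply]
    rw [hset]; exact hacy _
  · intro i j hij
    have hne : e.symm i ≠ e.symm j := fun h => hij (by
      rw [← e.apply_symm_apply i, h, e.apply_symm_apply])
    obtain ⟨x, y, hxy, hx, hy⟩ := hcomp (e.symm i) (e.symm j) hne
    exact ⟨x, y, hxy, by simp [hx], by simp [hy]⟩

lemma dac_bddAbove [Fintype V] (A : V → V → Prop) :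
    BddAbove {k | ∃ c : V → Fin k, IsAcyclicColoring A c ∧ IsCompleteColoring A c} := by
  refine ⟨Fintype.card V, fun k hk => ?_⟩
  obtain ⟨c, ⟨hs, _⟩, _⟩ := hk
  simpa using Fintype.card_le_of_surjective c hs

end Stmt6Aux

open Stmt6Aux in
/-- For each arc `f = (u,v)` in a nonempty digraph `D`,
`dac(D) - 1 ≤ dac(D - f) ≤ dac(D) + 1`. -/
theorem stmt6 {V : Type*} [Fintype V] [DecidableEq V] (A : V → V → Prop)
    (hirr : ∀ v : V, ¬ A v v)
    (u v : V) (hf : A u v) :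
    dac A - 1 ≤ dac (fun x y : V => A x y ∧ ¬(x = u ∧ y = v)) ∧
      dac (fun x y : V => A x y ∧ ¬(x = u ∧ y = v)) ≤ dac A + 1 := by
  classical
  set A' : V → V → Prop := fun x y => A x y ∧ ¬(x = u ∧ y = v) with hA'def
  have huv : u ≠ v := fun h => hirr v (h ▸ hf)
  have hbddA := dac_bddAbove A
  have hbddA' := dac_bddAbove A'
  constructor
  · -- dac A - 1 ≤ dac A'
    by_cases hne : {k | ∃ c : V → Fin k, IsAcyclicColoring A c ∧ IsCompleteColoring A c}.Nonempty
    swap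
    · rw [Set.not_nonempty_iff_eq_empty] at hne
      show dac A - 1 ≤ _
      rw [dac, hne]
      simp
    obtain ⟨c, ⟨hsurj, hacy⟩, -, hcomp⟩ :
        ∃ c : V → Fin (dac A), IsAcyclicColoring A c ∧ IsCompleteColoring A c :=
      Nat.sSup_mem hne hbddA
    have hacy' : ∀ i, AcyclicSet A' {w | c w = i} := fun i =>
      acyclicSet_of_rel_imp (fun x y _ _ h => h.1) (hacy i)
    by_cases hcomp' : ∀ i j : Fin (dac A), i ≠ j → ∃ x y : V, A' x y ∧ c x = i ∧ c y = j
    · have hk : dac A ∈ {k | ∃ c : V → Fin k,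
          IsAcyclicColoring A' c ∧ IsCompleteColoring A' c} :=
        ⟨c, ⟨hsurj, hacy'⟩, hsurj, hcomp'⟩
      exact (Nat.sub_le _ 1).trans (le_csSup hbddA' hk)
    push_neg at hcomp'
    obtain ⟨i, j, hij, hmiss⟩ := hcomp'
    -- every A-arc from class i to class j must be the deleted arc (u,v)
    have hmiss' : ∀ x y : V, A' x y → c x = i → c y = j → False := by
      intro x y hxy hx hy
      exact absurd hy (hmiss x y hxy hx)
    obtain ⟨x₀, y₀, hxy₀, hx₀, hy₀⟩ := hcomp i j hij
    have hx0 : x₀ = u ∧ y₀ = v := by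
      by_contra h
      exact hmiss' x₀ y₀ ⟨hxy₀, h⟩ hx₀ hy₀
    obtain ⟨rfl, rfl⟩ := hx0
    -- merged coloring
    let g : V → {x : Fin (dac A) // x ≠ j} := fun w =>
      if h : c w = j then ⟨i, hij⟩ else ⟨c w, h⟩
    have hgclass : ∀ s : {x : Fin (dac A) // x ≠ j}, s.1 ≠ i →
        {w | g w = s} = {w | c w = s.1} := by
      intro s hs
      ext w
      by_cases hw : c w = j
      · simp only [Set.mem_setOf_eq, g, dif_pos hw, hw]
        constructor
        · intro h; exact absurd (congrArg Subtype.val h).symm hs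
        · intro h; exact absurd (hw ▸ h) (Ne.symm s.2)
      · simp only [Set.mem_setOf_eq, g, dif_neg hw, Subtype.ext_iff]
    have hgclassI : {w | g w = ⟨i, hij⟩} = {w | c w = i} ∪ {w | c w = j} := by
      ext w
      by_cases hw : c w = j
      · simp [g, dif_pos hw, hw]
      · simp [g, dif_neg hw, Subtype.ext_iff, hw]
    have hgsurj : Function.Surjective g := by
      intro s
      obtain ⟨w, hw⟩ := hsurj s.1
      refine ⟨w, ?_⟩
      have hwj : c w ≠ j := fun h => s.2 (hw ▸ h ▸ rfl)
      simp [g, dif_neg hwj, Subtype.ext_iff, hw]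
    have hgacy : ∀ s, AcyclicSet A' {w | g w = s} := by
      intro s
      by_cases hs : s.1 = i
      · have : s = ⟨i, hij⟩ := Subtype.ext hs
        rw [this, hgclassI]
        exact acyclicSet_union (hacy' i) (hacy' j)
          (fun x hx y hy hA => hmiss' x y hA hx hy)
      · rw [hgclass s hs]; exact hacy' s.1
    have hgcomp : ∀ s s' : {x : Fin (dac A) // x ≠ j}, s ≠ s' →
        ∃ x y : V, A' x y ∧ g x = s ∧ g y = s' := by
      intro s s' hss
      have hne1 : s.1 ≠ s'.1 := fun h => hss (Subtype.ext h)
      obtain ⟨x, y, hxy, hx, hy⟩ := hcomp s.1 s'.1 hne1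
      have hxy' : A' x y := by
        refine ⟨hxy, ?_⟩
        rintro ⟨rfl, rfl⟩
        exact s'.2 (hy.symm.trans hy₀)
      have hgx : g x = s := by
        have hxj : c x ≠ j := fun h => s.2 (hx ▸ h ▸ rfl)
        simp [g, dif_neg hxj, Subtype.ext_iff, hx]
      have hgy : g y = s' := by
        have hyj : c y ≠ j := fun h => s'.2 (hy ▸ h ▸ rfl)
        simp [g, dif_neg hyj, Subtype.ext_iff, hy]
      exact ⟨x, y, hxy', hgx, hgy⟩
    have hcard : Fintype.card {x : Fin (dac A) // x ≠ j} = dac A - 1 := by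
      rw [Fintype.card_subtype_compl]; simp
    have hk : dac A - 1 ∈ {k | ∃ c : V → Fin k,
        IsAcyclicColoring A' c ∧ IsCompleteColoring A' c} := by
      rw [← hcard]
      exact mem_of_coloring hgsurj hgacy hgcomp
    exact le_csSup hbddA' hk

  · -- dac A' ≤ dac A + 1
    by_cases hne : {k | ∃ c : V → Fin k, IsAcyclicColoring A' c ∧ IsCompleteColoring A' c}.Nonempty
    swap
    · rw [Set.not_nonempty_iff_eq_empty] at hne
      show dac A' ≤ _
      rw [dac, hne]
      simp
    obtain ⟨c, ⟨hsurj, hacy'⟩, -, hcomp'⟩ :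
        ∃ c : V → Fin (dac A'), IsAcyclicColoring A' c ∧ IsCompleteColoring A' c :=
      Nat.sSup_mem hne hbddA'
    by_cases hacyA : ∀ s : Fin (dac A'), AcyclicSet A {w | c w = s}
    · have hkmem : dac A' ∈ {m | ∃ c : V → Fin m,
          IsAcyclicColoring A c ∧ IsCompleteColoring A c} := by
        refine ⟨c, ⟨hsurj, hacyA⟩, hsurj, fun i j hij => ?_⟩
        obtain ⟨x, y, hxy, hx, hy⟩ := hcomp' i j hij
        exact ⟨x, y, hxy.1, hx, hy⟩
      have hle : dac A' ≤ dac A := le_csSup hbddA hkmem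
      omega
    push_neg at hacyA
    obtain ⟨t, hnt⟩ := hacyA
    simp only [AcyclicSet, not_forall, not_not] at hnt
    obtain ⟨w, hw⟩ := hnt
    rcases transGen_split (u := u) (v := v) hw with hcyc | ⟨huS, hvS, hwu, hvw⟩
    · exact absurd hcyc (hacy' t w)
    have hcu : c u = t := huS
    have hcv : c v = t := hvS
    have htg : Relation.TransGen (fun x y =>
        x ∈ {w | c w = t} ∧ y ∈ {w | c w = t} ∧ (A x y ∧ ¬(x = u ∧ y = v))) v u := by
      rcases (Relation.reflTransGen_iff_eq_or_transGen).mp (hvw.trans hwu) with h | h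
      · exact absurd h huv
      · exact h
    obtain ⟨z, hzstep⟩ := exists_last htg
    have hcz : c z = t := hzstep.1
    have hAzu : A z u := hzstep.2.2.1
    have hzu : z ≠ u := fun h => hirr u (h ▸ hAzu)
    -- uniform acyclicity helper for classes of `c` avoiding `u`, w.r.t. the full digraph `A`
    have hclassAcy : ∀ (S : Set V) (s : Fin (dac A')), S ⊆ {w | c w = s} → u ∉ S →
        AcyclicSet A S := by
      intro S s hsub hu
      exact acyclicSet_of_rel_imp (A := A') (B := A)
        (fun x y hx _ hA => ⟨hA, fun hc => hu (hc.1 ▸ hx)⟩)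
        (acyclicSet_mono hsub (hacy' s))
    by_cases hBad : ∃ l : Fin (dac A'), l ≠ t ∧
      (¬(∃ x y : V, A' x y ∧ c x = t ∧ x ≠ u ∧ c y = l) ∨
       ¬(∃ x y : V, A' x y ∧ c x = l ∧ c y = t ∧ y ≠ u))
    · -- CASE A : some color class has one-directional connection to class t minus u
      obtain ⟨l, hlt, hP⟩ := hBad
      have htl : t ≠ l := Ne.symm hlt
      have hS₁ : AcyclicSet A {w | c w = t ∧ w ≠ u} :=
        hclassAcy _ t (fun w hw => hw.1) (fun hu => hu.2 rfl)
      have hT₁ : AcyclicSet A {w | c w = l} :=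
        hclassAcy _ l (fun w hw => hw) (fun hu => hlt (hcu.symm.trans hu).symm)
      have hJ : AcyclicSet A ({w | c w = t ∧ w ≠ u} ∪ {w | c w = l}) := by
        rcases hP with hP1 | hP2
        · refine acyclicSet_union hS₁ hT₁ (fun x hx y hy hA => hP1 ?_)
          exact ⟨x, y, ⟨hA, fun hc => hx.2 hc.1⟩, hx.1, hx.2, hy⟩
        · have := acyclicSet_union hT₁ hS₁ (fun x hx y hy hA => hP2
            ⟨x, y, ⟨hA, fun hc => hlt ((hc.1 ▸ hx).symm.trans hcu)⟩, hx, hy.1, hy.2⟩)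
          rwa [Set.union_comm] at this
      by_cases hc₂ : ∀ b : Fin (dac A'), b ≠ t → b ≠ l →
          (∃ y, A u y ∧ c y = b) ∧ (∃ x, A x u ∧ c x = b)
      · -- CASE A1 : k-coloring of A : u gets the color l alone, old class l joins class t
        set g₂ : V → Fin (dac A') := fun w =>
          if w = u then l else if c w = l then t else c w with hg₂
        have gvalu : g₂ u = l := by simp [hg₂]
        have gval : ∀ w, w ≠ u → c w ≠ l → g₂ w = c w := fun w h1 h2 => by
          simp [hg₂, h1, h2]
        have gvall : ∀ w, w ≠ u → c w = l → g₂ w = t := fun w h1 h2 => by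
          simp [hg₂, h1, h2]
        have hclassl : {w | g₂ w = l} = {u} := by
          ext w
          by_cases hwu : w = u
          · simp [hwu, gvalu]
          · by_cases hwl : c w = l
            · simp [gvall w hwu hwl, htl, hwu]
            · simp [gval w hwu hwl, hwl, hwu]
        have hclasst : {w | g₂ w = t} = ({w | c w = t ∧ w ≠ u} ∪ {w | c w = l}) := by
          ext w
          by_cases hwu : w = u
          · simp [hwu, gvalu, hlt, hcu, htl]
          · by_cases hwl : c w = l
            · simp [gvall w hwu hwl, hwl]
            · simp [gval w hwu hwl, hwl, hwu]
        have hclassb : ∀ s : Fin (dac A'), s ≠ t → s ≠ l →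
            {w | g₂ w = s} = {w | c w = s} := by
          intro s hst hsl
          ext w
          by_cases hwu : w = u
          · simp [hwu, gvalu, Ne.symm hsl, hcu, Ne.symm hst]
          · by_cases hwl : c w = l
            · simp [gvall w hwu hwl, hwl, Ne.symm hst, Ne.symm hsl]
            · simp [gval w hwu hwl]
        have hg₂acy : ∀ s : Fin (dac A'), AcyclicSet A {w | g₂ w = s} := by
          intro s
          by_cases hs : s = l
          · rw [hs, hclassl]; exact acyclicSet_singleton (hirr u)
          by_cases hst : s = t
          · rw [hst, hclasst]; exact hJ
          · rw [hclassb s hst hs]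
            exact hclassAcy _ s (fun w hw => hw) (fun hu => hst (hcu.symm.trans hu).symm)
        have hg₂surj : Function.Surjective g₂ := by
          intro s
          by_cases hs : s = l
          · exact ⟨u, by rw [gvalu, hs]⟩
          by_cases hst : s = t
          · refine ⟨v, ?_⟩
            have hvl : c v ≠ l := by rw [hcv]; exact htl
            rw [gval v (Ne.symm huv) hvl, hcv]; exact hst.symm
          · obtain ⟨w, hw⟩ := hsurj s
            have hwu : w ≠ u := fun h => hst ((h ▸ hw).symm.trans hcu)
            have hwl : c w ≠ l := fun h => hs (hw.symm.trans h)
            exact ⟨w, by rw [gval w hwu hwl, hw]⟩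
        have hg₂comp : ∀ i j : Fin (dac A'), i ≠ j →
            ∃ x y : V, A x y ∧ g₂ x = i ∧ g₂ y = j := by
          intro i j hij
          by_cases hi : i = l
          · rw [hi]
            by_cases hj : j = t
            · rw [hj]
              refine ⟨u, v, hf, gvalu, ?_⟩
              have hvl : c v ≠ l := fun h => htl (hcv.symm.trans h)
              rw [gval v (Ne.symm huv) hvl, hcv]
            · have hjl : j ≠ l := fun h => hij (hi.trans h.symm)
              obtain ⟨y, hAy, hy⟩ := (hc₂ j hj hjl).1
              have hyu : y ≠ u := fun h => hj ((h ▸ hy).symm.trans hcu)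
              have hyl : c y ≠ l := fun h => hjl (hy.symm.trans h)
              exact ⟨u, y, hAy, gvalu, by rw [gval y hyu hyl, hy]⟩
          by_cases hi' : i = t
          · rw [hi']
            by_cases hj : j = l
            · rw [hj]
              refine ⟨z, u, hAzu, ?_, gvalu⟩
              have hzl : c z ≠ l := fun h => htl (hcz.symm.trans h)
              rw [gval z hzu hzl, hcz]
            · obtain ⟨x, y, hxy, hx, hy⟩ := hcomp' l j (fun h => hj h.symm)
              have hxu : x ≠ u := fun h => hlt ((h ▸ hx).symm.trans hcu)
              have hjt : j ≠ t := fun h => hij (hi'.trans h.symm)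
              have hyu : y ≠ u := fun h => hjt ((h ▸ hy).symm.trans hcu)
              have hyl : c y ≠ l := fun h => hj (hy.symm.trans h)
              exact ⟨x, y, hxy.1, gvall x hxu hx, by rw [gval y hyu hyl, hy]⟩
          · by_cases hj : j = l
            · rw [hj]
              obtain ⟨x, hAx, hx⟩ := (hc₂ i hi' hi).2
              have hxu : x ≠ u := fun h => hi' ((h ▸ hx).symm.trans hcu)
              have hxl : c x ≠ l := fun h => hi (hx.symm.trans h)
              exact ⟨x, u, hAx, by rw [gval x hxu hxl, hx], gvalu⟩
            by_cases hj' : j = t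
            · rw [hj']
              obtain ⟨x, y, hxy, hx, hy⟩ := hcomp' i l hi
              have hxu : x ≠ u := fun h => hi' ((h ▸ hx).symm.trans hcu)
              have hxl : c x ≠ l := fun h => hi (hx.symm.trans h)
              have hyu : y ≠ u := fun h => hlt ((h ▸ hy).symm.trans hcu)
              exact ⟨x, y, hxy.1, by rw [gval x hxu hxl, hx], gvall y hyu hy⟩
            · obtain ⟨x, y, hxy, hx, hy⟩ := hcomp' i j hij
              have hxu : x ≠ u := fun h => hi' ((h ▸ hx).symm.trans hcu)
              have hxl : c x ≠ l := fun h => hi (hx.symm.trans h)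
              have hyu : y ≠ u := fun h => hj' ((h ▸ hy).symm.trans hcu)
              have hyl : c y ≠ l := fun h => hj (hy.symm.trans h)
              exact ⟨x, y, hxy.1, by rw [gval x hxu hxl, hx], by rw [gval y hyu hyl, hy]⟩
        have hkmem : dac A' ∈ {m | ∃ c : V → Fin m,
            IsAcyclicColoring A c ∧ IsCompleteColoring A c} := by
          have hcard : Fintype.card (Fin (dac A')) = dac A' := Fintype.card_fin _
          rw [← hcard]
          exact mem_of_coloring hg₂surj hg₂acy hg₂comp
        have hle : dac A' ≤ dac A := le_csSup hbddA hkmem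
        omega
      · -- CASE A2 : (k-1)-coloring of A
        push_neg at hc₂
        obtain ⟨m₀, hm0t, hm0l, hm0⟩ := hc₂
        have hdir : (∀ y, A u y → c y ≠ m₀) ∨ (∀ x, A x u → c x ≠ m₀) := by
          by_cases h : ∃ y, A u y ∧ c y = m₀
          · right; intro x hx hcx; exact hm0 h x hx hcx
          · left; intro y hy hcy; exact h ⟨y, hy, hcy⟩
        set g₃ : V → {x : Fin (dac A') // x ≠ l} := fun w =>
          if w = u then ⟨m₀, hm0l⟩ else if h : c w = l then ⟨t, htl⟩ else ⟨c w, h⟩ with hg₃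
        have gvalu : g₃ u = ⟨m₀, hm0l⟩ := by simp [hg₃]
        have gval : ∀ w, w ≠ u → ∀ (h : c w ≠ l), g₃ w = ⟨c w, h⟩ := fun w h1 h2 => by
          simp [hg₃, h1, h2]
        have gvall : ∀ w, w ≠ u → c w = l → g₃ w = ⟨t, htl⟩ := fun w h1 h2 => by
          simp [hg₃, h1, h2]
        have hclt : {w | g₃ w = ⟨t, htl⟩} = ({w | c w = t ∧ w ≠ u} ∪ {w | c w = l}) := by
          ext w
          by_cases hwu : w = u
          · simp [hwu, gvalu, Subtype.ext_iff, hm0t, hcu, htl]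
          · by_cases hwl : c w = l
            · simp [gvall w hwu hwl, hwl]
            · simp [gval w hwu hwl, Subtype.ext_iff, hwl, hwu]
        have hclm : {w | g₃ w = ⟨m₀, hm0l⟩} = ({w | c w = m₀} ∪ {u}) := by
          ext w
          by_cases hwu : w = u
          · simp [hwu, gvalu]
          · by_cases hwl : c w = l
            · simp [gvall w hwu hwl, Subtype.ext_iff, Ne.symm hm0t, hwl, hwu, Ne.symm hm0l]
            · simp [gval w hwu hwl, Subtype.ext_iff, hwu]
        have hclo : ∀ s : {x : Fin (dac A') // x ≠ l}, s.1 ≠ t → s.1 ≠ m₀ →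
            {w | g₃ w = s} = {w | c w = s.1} := by
          intro s hst hsm
          ext w
          by_cases hwu : w = u
          · simp [hwu, gvalu, Subtype.ext_iff, Ne.symm hsm, hcu, Ne.symm hst]
          · by_cases hwl : c w = l
            · have : l ≠ s.1 := fun h => s.2 h.symm
              simp [gvall w hwu hwl, Subtype.ext_iff, Ne.symm hst, hwl, this]
            · simp [gval w hwu hwl, Subtype.ext_iff]
        have hg₃acy : ∀ s : {x : Fin (dac A') // x ≠ l}, AcyclicSet A {w | g₃ w = s} := by
          intro s
          by_cases hst : s.1 = t
          · have hseq : s = ⟨t, htl⟩ := Subtype.ext hst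
            rw [hseq, hclt]; exact hJ
          by_cases hsm : s.1 = m₀
          · have hseq : s = ⟨m₀, hm0l⟩ := Subtype.ext hsm
            rw [hseq, hclm]
            have hM : AcyclicSet A {w | c w = m₀} :=
              hclassAcy _ m₀ (fun w hw => hw) (fun hu => hm0t (hcu.symm.trans hu).symm)
            rcases hdir with hd | hd
            · have := acyclicSet_union (acyclicSet_singleton (hirr u)) hM
                (fun x hx y hy hA => hd y (hx ▸ hA) hy)
              rwa [Set.union_comm] at this
            · exact acyclicSet_union hM (acyclicSet_singleton (hirr u))
                (fun x hx y hy hA => hd x (hy ▸ hA) hx)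
          · rw [hclo s hst hsm]
            exact hclassAcy _ s.1 (fun w hw => hw) (fun hu => hst (hcu.symm.trans hu).symm)
        have hg₃surj : Function.Surjective g₃ := by
          intro s
          by_cases hst : s.1 = t
          · refine ⟨v, ?_⟩
            have hvl : c v ≠ l := by rw [hcv]; exact htl
            rw [gval v (Ne.symm huv) hvl]
            exact Subtype.ext (hcv.trans hst.symm)
          by_cases hsm : s.1 = m₀
          · exact ⟨u, gvalu.trans (Subtype.ext hsm.symm)⟩
          · obtain ⟨w, hw⟩ := hsurj s.1
            have hwu : w ≠ u := fun h => hst ((h ▸ hw).symm.trans hcu)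
            have hwl : c w ≠ l := fun h => s.2 (hw.symm.trans h)
            exact ⟨w, (gval w hwu hwl).trans (Subtype.ext hw)⟩
        have mkx : ∀ (s : {x : Fin (dac A') // x ≠ l}) (x : V),
            (s.1 = t → c x = l) → (s.1 ≠ t → c x = s.1) → g₃ x = s := by
          intro s x h1 h2
          by_cases hst : s.1 = t
          · have hx := h1 hst
            have hxu : x ≠ u := fun h => hlt ((h ▸ hx).symm.trans hcu)
            rw [gvall x hxu hx]; exact Subtype.ext hst.symm
          · have hx := h2 hst
            have hxu : x ≠ u := fun h => hst ((h ▸ hx).symm.trans hcu)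
            have hxl : c x ≠ l := fun h => s.2 (hx.symm.trans h)
            rw [gval x hxu hxl]; exact Subtype.ext hx
        have hg₃comp : ∀ s s' : {x : Fin (dac A') // x ≠ l}, s ≠ s' →
            ∃ x y : V, A x y ∧ g₃ x = s ∧ g₃ y = s' := by
          intro s s' hss
          have hne1 : s.1 ≠ s'.1 := fun h => hss (Subtype.ext h)
          by_cases h1 : s.1 = t <;> by_cases h2 : s'.1 = t
          · exact absurd (h1.trans h2.symm) hne1
          · obtain ⟨x, y, hxy, hx, hy⟩ := hcomp' l s'.1 (fun h => s'.2 h.symm)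
            exact ⟨x, y, hxy.1, mkx s x (fun _ => hx) (fun h => absurd h1 h),
              mkx s' y (fun h => absurd h h2) (fun _ => hy)⟩
          · obtain ⟨x, y, hxy, hx, hy⟩ := hcomp' s.1 l s.2
            exact ⟨x, y, hxy.1, mkx s x (fun h => absurd h h1) (fun _ => hx),
              mkx s' y (fun _ => hy) (fun h => absurd h2 h)⟩
          · obtain ⟨x, y, hxy, hx, hy⟩ := hcomp' s.1 s'.1 hne1
            exact ⟨x, y, hxy.1, mkx s x (fun h => absurd h h1) (fun _ => hx),
              mkx s' y (fun h => absurd h h2) (fun _ => hy)⟩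
        have hcard : Fintype.card {x : Fin (dac A') // x ≠ l} = dac A' - 1 := by
          rw [Fintype.card_subtype_compl]; simp
        have hkmem : dac A' - 1 ∈ {m | ∃ c : V → Fin m,
            IsAcyclicColoring A c ∧ IsCompleteColoring A c} := by
          rw [← hcard]
          exact mem_of_coloring hg₃surj hg₃acy hg₃comp
        have hle : dac A' - 1 ≤ dac A := le_csSup hbddA hkmem
        omega
    · -- CASE B : every other color class is doubly connected with class t minus u
      push_neg at hBad
      by_cases hc₀ : ∀ b : Fin (dac A'), b ≠ t →
          (∃ y, A u y ∧ c y = b) ∧ (∃ x, A x u ∧ c x = b)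
      · -- CASE B1 : (k+1)-coloring of A : u gets a brand new color
        set g₀ : V → Option (Fin (dac A')) := fun w =>
          if w = u then none else some (c w) with hg₀
        have gvalu : g₀ u = none := by simp [hg₀]
        have gval : ∀ w, w ≠ u → g₀ w = some (c w) := fun w h1 => by simp [hg₀, h1]
        have hcln : {w | g₀ w = none} = {u} := by
          ext w
          by_cases hwu : w = u
          · simp [hwu, gvalu]
          · simp [gval w hwu, hwu]
        have hcls : ∀ s : Fin (dac A'), {w | g₀ w = some s} = {w | c w = s ∧ w ≠ u} := by
          intro s
          ext w
          by_cases hwu : w = u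
          · simp [hwu, gvalu]
          · simp [gval w hwu, hwu]
        have hg₀acy : ∀ s : Option (Fin (dac A')), AcyclicSet A {w | g₀ w = s} := by
          intro s
          cases s with
          | none => rw [hcln]; exact acyclicSet_singleton (hirr u)
          | some s =>
            rw [hcls s]
            exact hclassAcy _ s (fun w hw => hw.1) (fun hu => hu.2 rfl)
        have hg₀surj : Function.Surjective g₀ := by
          intro s
          cases s with
          | none => exact ⟨u, gvalu⟩
          | some s =>
            by_cases hst : s = t
            · exact ⟨v, by rw [gval v (Ne.symm huv), hcv, hst]⟩
            · obtain ⟨w, hw⟩ := hsurj s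
              have hwu : w ≠ u := fun h => hst ((h ▸ hw).symm.trans hcu)
              exact ⟨w, by rw [gval w hwu, hw]⟩
        have hg₀comp : ∀ s s' : Option (Fin (dac A')), s ≠ s' →
            ∃ x y : V, A x y ∧ g₀ x = s ∧ g₀ y = s' := by
          intro s s' hss
          cases s with
          | none =>
            cases s' with
            | none => exact absurd rfl hss
            | some b =>
              by_cases hbt : b = t
              · exact ⟨u, v, hf, gvalu, by rw [gval v (Ne.symm huv), hcv, hbt]⟩
              · obtain ⟨y, hAy, hy⟩ := (hc₀ b hbt).1
                have hyu : y ≠ u := fun h => hbt ((h ▸ hy).symm.trans hcu)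
                exact ⟨u, y, hAy, gvalu, by rw [gval y hyu, hy]⟩
          | some a =>
            cases s' with
            | none =>
              by_cases hat : a = t
              · exact ⟨z, u, hAzu, by rw [gval z hzu, hcz, hat], gvalu⟩
              · obtain ⟨x, hAx, hx⟩ := (hc₀ a hat).2
                have hxu : x ≠ u := fun h => hat ((h ▸ hx).symm.trans hcu)
                exact ⟨x, u, hAx, by rw [gval x hxu, hx], gvalu⟩
            | some b =>
              have hab : a ≠ b := fun h => hss (by rw [h])
              by_cases hat : a = t
              · have hbt : b ≠ t := fun h => hab (hat.trans h.symm)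
                obtain ⟨x, y, hxy, hx, hxu, hy⟩ := (hBad b hbt).1
                have hyu : y ≠ u := fun h => hbt ((h ▸ hy).symm.trans hcu)
                exact ⟨x, y, hxy.1, by rw [gval x hxu, hx, hat], by rw [gval y hyu, hy]⟩
              by_cases hbt : b = t
              · obtain ⟨x, y, hxy, hx, hy, hyu⟩ := (hBad a hat).2
                have hxu : x ≠ u := fun h => hat ((h ▸ hx).symm.trans hcu)
                exact ⟨x, y, hxy.1, by rw [gval x hxu, hx], by rw [gval y hyu, hy, hbt]⟩
              · obtain ⟨x, y, hxy, hx, hy⟩ := hcomp' a b hab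
                have hxu : x ≠ u := fun h => hat ((h ▸ hx).symm.trans hcu)
                have hyu : y ≠ u := fun h => hbt ((h ▸ hy).symm.trans hcu)
                exact ⟨x, y, hxy.1, by rw [gval x hxu, hx], by rw [gval y hyu, hy]⟩
        have hkmem : dac A' + 1 ∈ {m | ∃ c : V → Fin m,
            IsAcyclicColoring A c ∧ IsCompleteColoring A c} := by
          have hcard : Fintype.card (Option (Fin (dac A'))) = dac A' + 1 := by simp
          rw [← hcard]
          exact mem_of_coloring hg₀surj hg₀acy hg₀comp
        have hle : dac A' + 1 ≤ dac A := le_csSup hbddA hkmem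
        omega
      · -- CASE B2 : k-coloring of A : u moves to the class m₀
        push_neg at hc₀
        obtain ⟨m₀, hm0t, hm0⟩ := hc₀
        have hdir : (∀ y, A u y → c y ≠ m₀) ∨ (∀ x, A x u → c x ≠ m₀) := by
          by_cases h : ∃ y, A u y ∧ c y = m₀
          · right; intro x hx hcx; exact hm0 h x hx hcx
          · left; intro y hy hcy; exact h ⟨y, hy, hcy⟩
        set g₁ : V → Fin (dac A') := fun w => if w = u then m₀ else c w with hg₁
        have gvalu : g₁ u = m₀ := by simp [hg₁]
        have gval : ∀ w, w ≠ u → g₁ w = c w := fun w h1 => by simp [hg₁, h1]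
        have hclm : {w | g₁ w = m₀} = ({w | c w = m₀} ∪ {u}) := by
          ext w
          by_cases hwu : w = u
          · simp [hwu, gvalu]
          · simp [gval w hwu, hwu]
        have hclo : ∀ s : Fin (dac A'), s ≠ m₀ →
            {w | g₁ w = s} = {w | c w = s ∧ w ≠ u} := by
          intro s hs
          ext w
          by_cases hwu : w = u
          · simp [hwu, gvalu, Ne.symm hs]
          · simp [gval w hwu, hwu]
        have hg₁acy : ∀ s : Fin (dac A'), AcyclicSet A {w | g₁ w = s} := by
          intro s
          by_cases hs : s = m₀
          · rw [hs, hclm]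
            have hM : AcyclicSet A {w | c w = m₀} :=
              hclassAcy _ m₀ (fun w hw => hw) (fun hu => hm0t (hcu.symm.trans hu).symm)
            rcases hdir with hd | hd
            · have := acyclicSet_union (acyclicSet_singleton (hirr u)) hM
                (fun x hx y hy hA => hd y (hx ▸ hA) hy)
              rwa [Set.union_comm] at this
            · exact acyclicSet_union hM (acyclicSet_singleton (hirr u))
                (fun x hx y hy hA => hd x (hy ▸ hA) hx)
          · rw [hclo s hs]
            exact hclassAcy _ s (fun w hw => hw.1) (fun hu => hu.2 rfl)
        have hg₁surj : Function.Surjective g₁ := by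
          intro s
          by_cases hs : s = m₀
          · exact ⟨u, gvalu.trans hs.symm⟩
          by_cases hst : s = t
          · exact ⟨v, by rw [gval v (Ne.symm huv), hcv, hst]⟩
          · obtain ⟨w, hw⟩ := hsurj s
            have hwu : w ≠ u := fun h => hst ((h ▸ hw).symm.trans hcu)
            exact ⟨w, by rw [gval w hwu, hw]⟩
        have hg₁comp : ∀ i j : Fin (dac A'), i ≠ j →
            ∃ x y : V, A x y ∧ g₁ x = i ∧ g₁ y = j := by
          intro i j hij
          by_cases hi : i = t
          · have hjt : j ≠ t := fun h => hij (hi.trans h.symm)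
            obtain ⟨x, y, hxy, hx, hxu, hy⟩ := (hBad j hjt).1
            have hyu : y ≠ u := fun h => hjt ((h ▸ hy).symm.trans hcu)
            exact ⟨x, y, hxy.1, by rw [gval x hxu, hx, hi], by rw [gval y hyu, hy]⟩
          by_cases hj : j = t
          · obtain ⟨x, y, hxy, hx, hy, hyu⟩ := (hBad i hi).2
            have hxu : x ≠ u := fun h => hi ((h ▸ hx).symm.trans hcu)
            exact ⟨x, y, hxy.1, by rw [gval x hxu, hx], by rw [gval y hyu, hy, hj]⟩
          · obtain ⟨x, y, hxy, hx, hy⟩ := hcomp' i j hij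
            have hxu : x ≠ u := fun h => hi ((h ▸ hx).symm.trans hcu)
            have hyu : y ≠ u := fun h => hj ((h ▸ hy).symm.trans hcu)
            exact ⟨x, y, hxy.1, by rw [gval x hxu, hx], by rw [gval y hyu, hy]⟩
        have hkmem : dac A' ∈ {m | ∃ c : V → Fin m,
            IsAcyclicColoring A c ∧ IsCompleteColoring A c} := by
          have hcard : Fintype.card (Fin (dac A')) = dac A' := Fintype.card_fin _
          rw [← hcard]
          exact mem_of_coloring hg₁surj hg₁acy hg₁comp
        have hle : dac A' ≤ dac A := le_csSup hbddA hkmem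
        omega
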